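/- Order the alphabet {a, b} by a < b and order words of equal length lexicographically. Let Ψ be a cubeless word over {a, b} whose last letter is b, and for each k ≥ 0 let Θ_k be the word Ψ followed by the first k letters of the periodic infinite word aabaabaab... (period aab). Let Q_k denote the number of cubeless words of length |Ψ| + k that are greater than or equal to Θ_k in the lexicographic order. Then Q_k = Q_{k-1} + Q_{k-2} for all k ≥ 2. -/

import Mathlib

namespace CubelessAux

abbrev BLex := List.Lex (· < · : Bool → Bool → Prop)

lemma lex_cons_iff {a b : Bool} {s t : List Bool} :
    BLex (a::s) (b::t) ↔ a < b ∨ (a = b ∧ BLex s t) := by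
  constructor
  · intro h
    cases h with
    | rel h => exact .inl h
    | cons h => exact .inr ⟨rfl, h⟩
  · rintro (h | ⟨rfl, h⟩)
    · exact .rel h
    · exact .cons h

lemma lex_append_iff : ∀ (s t u v : List Bool), s.length = t.length →
    (BLex (s ++ u) (t ++ v) ↔ BLex s t ∨ (s = t ∧ BLex u v))
  | [], [], u, v, _ => by
      constructor
      · intro h; exact Or.inr ⟨rfl, h⟩
      · rintro (h | ⟨-, h⟩)
        · exact absurd h (List.not_lex_nil)
        · exact h
  | [], _::_, _, _, h => by simp at h
  | _::_, [], _, _, h => by simp at h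
  | a::s, b::t, u, v, h => by
      simp only [List.cons_append, lex_cons_iff,
        lex_append_iff s t u v (by simpa using h), List.cons.injEq]
      tauto

lemma lexle_append_iff (s t u v : List Bool) (h : s.length = t.length) :
    (s ++ u = t ++ v ∨ BLex (s ++ u) (t ++ v)) ↔
      BLex s t ∨ (s = t ∧ (u = v ∨ BLex u v)) := by
  rw [lex_append_iff s t u v h]
  have he : s ++ u = t ++ v ↔ s = t ∧ u = v :=
    ⟨fun h' => ⟨(List.append_inj h' h).1, (List.append_inj h' h).2⟩,
     by rintro ⟨rfl, rfl⟩; rfl⟩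
  rw [he]; tauto

lemma infix_snoc {p l : List Bool} {x : Bool} :
    p <:+: l ++ [x] ↔ p <:+: l ∨ p <:+ l ++ [x] := by
  constructor
  · rintro ⟨s, t, h⟩
    rcases t.eq_nil_or_concat with rfl | ⟨t', y, rfl⟩
    · right; exact ⟨s, by simpa using h⟩
    · left
      rw [List.concat_eq_append] at h
      rw [show s ++ p ++ (t' ++ [y]) = (s ++ (p ++ t')) ++ [y] by simp] at h
      have h2 := congrArg List.dropLast h
      rw [List.dropLast_concat, List.dropLast_concat] at h2
      exact ⟨s, t', by simpa using h2⟩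
  · rintro (h | h)
    · exact h.trans (List.prefix_append l [x]).isInfix
    · exact h.isInfix

lemma suffix_pair {a b : Bool} {l : List Bool} (h : [a, b] <:+ l) :
    l.getLast? = some b ∧ l.dropLast.getLast? = some a := by
  obtain ⟨s, rfl⟩ := h
  rw [show s ++ [a, b] = (s ++ [a]) ++ [b] by simp]
  rw [List.dropLast_concat]
  simp [List.getLast?_concat]

lemma cubeless_snoc {l : List Bool} {x : Bool} (h : ∀ c, ¬[c,c,c] <:+: l)
    (h2 : ¬ [x, x] <:+ l) (c : Bool) : ¬ [c,c,c] <:+: l ++ [x] := by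
  rw [infix_snoc]
  rintro (h3 | h3)
  · exact h c h3
  · obtain ⟨s, hs⟩ := h3
    have hx : c = x := by
      have := congrArg List.getLast? hs
      rw [show s ++ [c,c,c] = (s ++ [c,c]) ++ [c] by simp, List.getLast?_concat,
        List.getLast?_concat] at this
      exact Option.some_injective _ this
    subst hx
    apply h2
    have := congrArg List.dropLast hs
    rw [show s ++ [c,c,c] = (s ++ [c,c]) ++ [c] by simp, List.dropLast_concat,
      List.dropLast_concat] at this
    exact ⟨s, this⟩

lemma exists_concat2 {l : List Bool} (h : 2 ≤ l.length) : ∃ u x y, l = u ++ [x, y] := by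
  rcases l.eq_nil_or_concat with rfl | ⟨u1, y, rfl⟩
  · simp at h
  rcases u1.eq_nil_or_concat with rfl | ⟨u, x, rfl⟩
  · simp at h
  exact ⟨u, x, y, by simp⟩

end CubelessAux
namespace CubelessAux

def pat (k : ℕ) : Bool := decide (k % 3 = 2)

def Th (Ψ : List Bool) (k : ℕ) : List Bool :=
  Ψ ++ (List.range k).map (fun i => decide (i % 3 = 2))

def SS (Ψ : List Bool) (k : ℕ) : Set (List Bool) :=
  {v | v.length = Ψ.length + k ∧ (∀ c : Bool, ¬ [c,c,c] <:+: v) ∧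
       (Th Ψ k = v ∨ BLex (Th Ψ k) v)}

lemma mem_SS {Ψ : List Bool} {k : ℕ} {v : List Bool} :
    v ∈ SS Ψ k ↔ (v.length = Ψ.length + k ∧ (∀ c : Bool, ¬ [c,c,c] <:+: v) ∧
       (Th Ψ k = v ∨ BLex (Th Ψ k) v)) := Iff.rfl

lemma Th_snoc (Ψ : List Bool) (k : ℕ) : Th Ψ (k+1) = Th Ψ k ++ [pat k] := by
  simp [Th, pat, List.range_succ]

lemma Th_two (Ψ : List Bool) (k : ℕ) :
    Th Ψ (k+2) = Th Ψ k ++ [pat k, pat (k+1)] := by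
  rw [Th_snoc, Th_snoc]; simp

lemma Th_len (Ψ : List Bool) (k : ℕ) : (Th Ψ k).length = Ψ.length + k := by simp [Th]

lemma Th_getLast {Ψ : List Bool} (hlast : Ψ.getLast? = some true) :
    ∀ k, (Th Ψ k).getLast? = some (if k = 0 then true else pat (k-1))
  | 0 => by simpa [Th] using hlast
  | (k+1) => by rw [Th_snoc]; simp [List.getLast?_concat]

lemma mem_S2_iff {Ψ : List Bool} {k : ℕ} {u : List Bool} {x y : Bool}
    (hu : u.length = Ψ.length + k) :
    u ++ [x, y] ∈ SS Ψ (k+2) ↔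
      ((∀ c : Bool, ¬[c,c,c] <:+: u ++ [x,y]) ∧
        (BLex (Th Ψ k) u ∨ (Th Ψ k = u ∧
          ([pat k, pat (k+1)] = [x,y] ∨ BLex [pat k, pat (k+1)] [x, y])))) := by
  have h1 : (u ++ [x,y]).length = Ψ.length + (k+2) := by
    simp [hu] <;> omega
  rw [mem_SS, Th_two,
    lexle_append_iff (Th Ψ k) u [pat k, pat (k+1)] [x, y] (by rw [Th_len, hu])]
  simp only [h1, true_and]

lemma mem_S1_iff {Ψ : List Bool} {k : ℕ} {u : List Bool} {x : Bool}
    (hu : u.length = Ψ.length + k) :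
    u ++ [x] ∈ SS Ψ (k+1) ↔
      ((∀ c : Bool, ¬[c,c,c] <:+: u ++ [x]) ∧
        (BLex (Th Ψ k) u ∨ (Th Ψ k = u ∧
          ([pat k] = [x] ∨ BLex [pat k] [x])))) := by
  have h1 : (u ++ [x]).length = Ψ.length + (k+1) := by
    simp [hu] <;> omega
  rw [mem_SS, Th_snoc,
    lexle_append_iff (Th Ψ k) u [pat k] [x] (by rw [Th_len, hu])]
  simp only [h1, true_and]

lemma pat_not_both (k : ℕ) : pat k = true → pat (k+1) = false := by
  simp only [pat, decide_eq_true_eq, decide_eq_false_iff_not]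
  omega

end CubelessAux
namespace CubelessAux

lemma dl2 (u : List Bool) (x y : Bool) : (u ++ [x, y]).dropLast = u ++ [x] := by
  rw [show u ++ [x, y] = (u ++ [x]) ++ [y] from by simp, List.dropLast_concat]

lemma gl2 (u : List Bool) (x y : Bool) : (u ++ [x, y]).getLast? = some y := by
  rw [show u ++ [x, y] = (u ++ [x]) ++ [y] from by simp, List.getLast?_concat]

lemma snoc_eq_snoc {u v : List Bool} {x y : Bool} (h : u ++ [x] = v ++ [y]) :
    u = v ∧ x = y := by
  have h1 := congrArg List.dropLast h
  rw [List.dropLast_concat, List.dropLast_concat] at h1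
  have h2 := congrArg List.getLast? h
  rw [List.getLast?_concat, List.getLast?_concat] at h2
  exact ⟨h1, Option.some_injective _ h2⟩

lemma bool_ne {x y : Bool} (h : x ≠ y) : y = !x := by
  cases x <;> cases y <;> simp_all

lemma forced_tail {u' : List Bool} {q x y : Bool}
    (hc : ∀ c : Bool, ¬[c,c,c] <:+: ((u' ++ [q]) ++ [x, y])) (hxy : x = y) : x = !q := by
  by_contra h
  have hq : x = q := by cases x <;> cases q <;> simp_all
  subst hq
  subst hxy
  exact hc x ⟨u', [], by simp⟩

lemma pair_ext {x p1 : Bool} (h : x = true → p1 = false) :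
    [x, p1] = [x, !x] ∨ BLex [x, p1] [x, !x] := by
  cases x
  · cases p1
    · right; decide
    · left; rfl
  · have := h rfl
    subst this
    left; rfl

lemma pat_eq_true {m : ℕ} (h : m % 3 = 2) : pat m = true := by simp [pat, h]

lemma pat_eq_false {m : ℕ} (h : m % 3 ≠ 2) : pat m = false := by simp [pat, h]

lemma card_step (Ψ : List Bool) (hlast : Ψ.getLast? = some true) (k : ℕ) :
    (SS Ψ (k+2)).ncard = (SS Ψ (k+1)).ncard + (SS Ψ k).ncard := by
  classical
  have hne : Ψ ≠ [] := fun h => by simp [h] at hlast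
  have hn : 1 ≤ Ψ.length := List.length_pos_iff.2 hne
  have hdec : ∀ v ∈ SS Ψ (k+2), ∃ u x y, v = u ++ [x, y] ∧ u.length = Ψ.length + k := by
    intro v hv
    obtain ⟨u, x, y, rfl⟩ := exists_concat2 (l := v) (by rw [(mem_SS.mp hv).1]; omega)
    refine ⟨u, x, y, rfl, ?_⟩
    have := (mem_SS.mp hv).1
    simp at this
    omega
  set D := {v ∈ SS Ψ (k+2) | v.dropLast.getLast? ≠ v.getLast?} with hD
  set E := {v ∈ SS Ψ (k+2) | v.dropLast.getLast? = v.getLast?} with hE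
  have hfin : ∀ K, (SS Ψ K).Finite := fun K =>
    (List.finite_length_eq Bool (Ψ.length + K)).subset fun v hv => (mem_SS.mp hv).1
  have hDfin : D.Finite := (hfin _).subset (Set.sep_subset _ _)
  have hEfin : E.Finite := (hfin _).subset (Set.sep_subset _ _)
  have hsplit : SS Ψ (k+2) = D ∪ E := by
    ext v
    simp only [hD, hE, Set.mem_union, Set.mem_sep_iff]
    tauto
  have hdisj : Disjoint D E := by
    rw [Set.disjoint_left]
    rintro v ⟨-, h1⟩ ⟨-, h2⟩
    exact h1 h2
  -- the D part
  have hDimg : List.dropLast '' D = SS Ψ (k+1) := by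
    ext w
    constructor
    · rintro ⟨v, ⟨hv, hvd⟩, rfl⟩
      obtain ⟨u, x, y, rfl, hu⟩ := hdec v hv
      rw [dl2, gl2, List.getLast?_concat] at hvd
      have hxy : x ≠ y := fun h => hvd (by rw [h])
      rw [mem_S2_iff hu] at hv
      obtain ⟨hcv, hlex⟩ := hv
      rw [dl2, mem_S1_iff hu]
      have hpre : (u ++ [x]) <+: (u ++ [x, y]) := ⟨[y], by simp⟩
      refine ⟨fun c hc => hcv c (hc.trans hpre.isInfix), ?_⟩
      rcases hlex with h | ⟨he, hp⟩
      · exact Or.inl h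
      · refine Or.inr ⟨he, ?_⟩
        rcases hp with hp | hp
        · injection hp with h1 h2
          exact Or.inl (by rw [h1])
        · rw [lex_cons_iff] at hp
          rcases hp with h1 | ⟨h1, h2⟩
          · exact Or.inr (.rel h1)
          · exact Or.inl (by rw [h1])
    · intro hw
      obtain ⟨u, x, rfl⟩ : ∃ u x, w = u ++ [x] := by
        rcases w.eq_nil_or_concat' with rfl | ⟨u, x, rfl⟩
        · exact absurd (mem_SS.mp hw).1 (by simp)
        · exact ⟨u, x, rfl⟩
      have hu : u.length = Ψ.length + k := by
        have := (mem_SS.mp hw).1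
        simp at this
        omega
      rw [mem_S1_iff hu] at hw
      obtain ⟨hcw, hlex⟩ := hw
      refine ⟨(u ++ [x]) ++ [!x], ⟨?_, ?_⟩, List.dropLast_concat⟩
      · rw [show (u ++ [x]) ++ [!x] = u ++ [x, !x] from by simp, mem_S2_iff hu]
        constructor
        · rw [show u ++ [x, !x] = (u ++ [x]) ++ [!x] from by simp]
          refine cubeless_snoc hcw ?_
          intro hsuf
          have h1 := (suffix_pair hsuf).1
          rw [List.getLast?_concat] at h1
          have h2 := Option.some_injective _ h1
          exact absurd h2 (by cases x <;> simp)
        · rcases hlex with h | ⟨he, hp⟩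
          · exact Or.inl h
          · refine Or.inr ⟨he, ?_⟩
            rcases hp with hp | hp
            · injection hp with h1
              rw [← h1]
              exact pair_ext (pat_not_both k)
            · rw [lex_cons_iff] at hp
              rcases hp with h1 | ⟨h1, h2⟩
              · exact Or.inr (.rel h1)
              · exact absurd h2 (List.not_lex_nil)
      · rw [List.dropLast_concat, List.getLast?_concat, List.getLast?_concat]
        simp
  -- the E part
  have hEimg : (fun v : List Bool => v.dropLast.dropLast) '' E = SS Ψ k := by
    ext w
    constructor
    · rintro ⟨v, ⟨hv, hvd⟩, rfl⟩
      obtain ⟨u, x, y, rfl, hu⟩ := hdec v hv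
      rw [dl2, gl2, List.getLast?_concat] at hvd
      show (u ++ [x, y]).dropLast.dropLast ∈ SS Ψ k
      rw [dl2, List.dropLast_concat]
      rw [mem_S2_iff hu] at hv
      obtain ⟨hcv, hlex⟩ := hv
      have hpre : u <+: (u ++ [x, y]) := ⟨[x, y], rfl⟩
      refine mem_SS.mpr ⟨hu, fun c hc => hcv c (hc.trans hpre.isInfix), ?_⟩
      rcases hlex with h | ⟨he, -⟩
      · exact Or.inr h
      · exact Or.inl he
    · intro hw
      obtain ⟨hwl, hwc, hwlex⟩ := mem_SS.mp hw
      obtain ⟨u', q, rfl⟩ : ∃ u' q, w = u' ++ [q] := by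
        rcases w.eq_nil_or_concat' with rfl | ⟨u', q, rfl⟩
        · exact absurd hwl (by simp; omega)
        · exact ⟨u', q, rfl⟩
      set w := u' ++ [q] with hw'
      have hc1 : ∀ c : Bool, ¬[c,c,c] <:+: w ++ [!q] := by
        refine cubeless_snoc hwc ?_
        intro hsuf
        have h1 := (suffix_pair hsuf).1
        rw [hw', List.getLast?_concat] at h1
        have h2 := Option.some_injective _ h1
        exact absurd h2 (by cases q <;> simp)
      have hc2 : ∀ c : Bool, ¬[c,c,c] <:+: (w ++ [!q]) ++ [!q] := by
        refine cubeless_snoc hc1 ?_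
        intro hsuf
        have h1 := (suffix_pair hsuf).2
        rw [List.dropLast_concat, hw', List.getLast?_concat] at h1
        have h2 := Option.some_injective _ h1
        exact absurd h2 (by cases q <;> simp)
      refine ⟨w ++ [!q, !q], ⟨?_, ?_⟩, ?_⟩
      · rw [mem_S2_iff hwl]
        refine ⟨?_, ?_⟩
        · rw [show w ++ [!q, !q] = (w ++ [!q]) ++ [!q] from by simp]
          exact hc2
        · rcases hwlex with he | h
          · refine Or.inr ⟨he, ?_⟩
            have hq : q = (if k = 0 then true else pat (k-1)) := by
              have h1 := Th_getLast hlast k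
              rw [he, hw', List.getLast?_concat] at h1
              exact Option.some_injective _ h1
            rcases Nat.eq_zero_or_pos k with rfl | hk
            · simp at hq
              subst hq
              left
              decide
            · rw [if_neg (by omega)] at hq
              have h3 : k % 3 = 0 ∨ k % 3 = 1 ∨ k % 3 = 2 := by omega
              rcases h3 with h3 | h3 | h3
              · rw [hq, pat_eq_true (m := k - 1) (by omega),
                  pat_eq_false (m := k) (by omega), pat_eq_false (m := k + 1) (by omega)]
                left; rfl
              · rw [hq, pat_eq_false (m := k - 1) (by omega),
                  pat_eq_false (m := k) (by omega), pat_eq_true (m := k + 1) (by omega)]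
                right; decide
              · rw [hq, pat_eq_false (m := k - 1) (by omega),
                  pat_eq_true (m := k) (by omega), pat_eq_false (m := k + 1) (by omega)]
                right; decide
          · exact Or.inl h
      · show (w ++ [!q, !q]).dropLast.getLast? = (w ++ [!q, !q]).getLast?
        rw [dl2, gl2, List.getLast?_concat]
      · show (w ++ [!q, !q]).dropLast.dropLast = w
        rw [dl2, List.dropLast_concat]
  have injD : Set.InjOn List.dropLast D := by
    rintro v1 ⟨hv1, hd1⟩ v2 ⟨hv2, hd2⟩ he
    obtain ⟨u1, x1, y1, rfl, hu1⟩ := hdec v1 hv1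
    obtain ⟨u2, x2, y2, rfl, hu2⟩ := hdec v2 hv2
    rw [dl2, dl2] at he
    obtain ⟨rfl, rfl⟩ := snoc_eq_snoc he
    rw [dl2, gl2, List.getLast?_concat] at hd1 hd2
    have h1 : x1 ≠ y1 := fun h => hd1 (by rw [h])
    have h2 : x1 ≠ y2 := fun h => hd2 (by rw [h])
    rw [bool_ne h1, bool_ne h2]
  have injE : Set.InjOn (fun v : List Bool => v.dropLast.dropLast) E := by
    rintro v1 ⟨hv1, hd1⟩ v2 ⟨hv2, hd2⟩ he
    obtain ⟨u1, x1, y1, rfl, hu1⟩ := hdec v1 hv1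
    obtain ⟨u2, x2, y2, rfl, hu2⟩ := hdec v2 hv2
    simp only [dl2, List.dropLast_concat] at he
    subst he
    rw [dl2, gl2, List.getLast?_concat] at hd1 hd2
    have h1 : x1 = y1 := Option.some_injective _ hd1
    have h2 : x2 = y2 := Option.some_injective _ hd2
    obtain ⟨u', q, rfl⟩ : ∃ u' q, u1 = u' ++ [q] := by
      rcases u1.eq_nil_or_concat' with rfl | ⟨u', q, rfl⟩
      · exact absurd hu1 (by simp; omega)
      · exact ⟨u', q, rfl⟩
    have e1 : x1 = !q := forced_tail ((mem_SS.mp hv1).2.1) h1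
    have e2 : x2 = !q := forced_tail ((mem_SS.mp hv2).2.1) h2
    rw [← h1, ← h2, e1, e2]
  rw [hsplit, Set.ncard_union_eq hdisj hDfin hEfin]
  have c1 : (SS Ψ (k+1)).ncard = D.ncard := by
    rw [← hDimg, Set.ncard_image_of_injOn injD]
  have c2 : (SS Ψ k).ncard = E.ncard := by
    rw [← hEimg, Set.ncard_image_of_injOn injE]
  rw [c1, c2]

end CubelessAux

/-- Order the alphabet `{a, b}` as `Bool` with `a = false < b = true`, and compare
words of equal length lexicographically. Let `Ψ` be a cubeless word ending in `b`,
and let `Θ k` be `Ψ` followed by the first `k` letters of the periodic infinite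
word `aabaabaab…`. If `Q k` is the number of cubeless words of length `Ψ.length + k`
that are `≥ Θ k` in the lexicographic order, then `Q` satisfies the Fibonacci
recurrence `Q (k+2) = Q (k+1) + Q k`. -/
theorem cubeless_lex_count_fib_recurrence (Ψ : List Bool)
    (hcube : ∀ c : Bool, ¬ [c, c, c] <:+: Ψ) (hlast : Ψ.getLast? = some true)
    (Θ : ℕ → List Bool)
    (hΘ : ∀ k : ℕ, Θ k = Ψ ++ (List.range k).map (fun i => decide (i % 3 = 2)))
    (Q : ℕ → ℕ)
    (hQ : ∀ k : ℕ, Q k = Nat.card {v : List Bool //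
        v.length = Ψ.length + k ∧ (∀ c : Bool, ¬ [c, c, c] <:+: v) ∧
        (Θ k = v ∨ List.Lex (· < ·) (Θ k) v)}) :
    ∀ k : ℕ, Q (k + 2) = Q (k + 1) + Q k := by
  have hTh : ∀ K, Θ K = CubelessAux.Th Ψ K := fun K => hΘ K
  have key : ∀ K, Q K = (CubelessAux.SS Ψ K).ncard := by
    intro K
    rw [hQ K, ← Nat.card_coe_set_eq]
    exact Nat.card_congr (Equiv.subtypeEquivRight fun v => by rw [hTh K]; exact Iff.rfl)
  intro k
  rw [key, key, key]
  exact CubelessAux.card_step Ψ hlast k
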